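/- Value identity after the until witness has passed: fix history x_{0:s} and suppose the optimal witness time τ := t*(x_{0:s}) of ψ = q U r satisfies τ < s. Then with c_τ := min_{0 ≤ i < τ} q(x_i), the history value satisfies V_ψ(x_{0:s}) = min( c_τ, V_r(x_{τ:s}) ), where V_r(x_{τ:s}) is the history value of r for the suffix history x_{τ:s}. -/
import Mathlib


variable {X A : Type*}

/-- Suffix (time shift) of an infinite trajectory. -/
def shift (x : ℕ → X) (t : ℕ) : ℕ → X := fun n => x (n + t)

/-- Trajectory of the deterministic system `x_{k+1} = f(x_k, a_k)` from `x0`. -/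
def traj (f : X → A → X) (x0 : X) (a : ℕ → A) : ℕ → X
  | 0 => x0
  | n + 1 => f (traj f x0 a n) (a n)

/-- Optimal value of a trajectory score from a state. -/
noncomputable def Vstate (f : X → A → X) (ψ : (ℕ → X) → EReal) (x0 : X) : EReal :=
  ⨆ a : ℕ → A, ψ (traj f x0 a)

/-- Glue a history prefix `x_{0:k-1}` with a continuation trajectory `y` started at time `k`. -/
def splice (x : ℕ → X) (k : ℕ) (y : ℕ → X) : ℕ → X := fun n => if n < k then x n else y (n - k)

/-- History value function: optimal robustness over all dynamically feasible continuations
of the history `x_{0:k}` (the continuation starts from `x k`). -/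
noncomputable def Vhist (f : X → A → X) (ψ : (ℕ → X) → EReal) (x : ℕ → X) (k : ℕ) : EReal :=
  ⨆ a : ℕ → A, ψ (splice x k (traj f (x k) a))

/-- History Q-function: apply action `a` at time `k`, then maximize over continuations. -/
noncomputable def Qhist (f : X → A → X) (ψ : (ℕ → X) → EReal) (x : ℕ → X) (k : ℕ) (a : A) :
    EReal :=
  ⨆ c : ℕ → A, ψ (splice x (k + 1) (traj f (f (x k) a) c))

/-- Trajectory generated by a (non-Markovian) policy `π` from the history `x_{0:k}`:
it agrees with `x` up to time `k` and thereafter applies `π n` to the history `x_{0:n}`. -/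
def genFrom (f : X → A → X) (π : ℕ → (ℕ → X) → A) (x : ℕ → X) (k : ℕ) : ℕ → X
  | 0 => x 0
  | n + 1 =>
    if n + 1 ≤ k then x (n + 1)
    else f (genFrom f π x k n) (π n (fun m => genFrom f π x k (min m n)))
  termination_by n => n
  decreasing_by all_goals omega

/-- The candidate term at witness time `t` in the quantitative semantics of `q U r`:
`min (r (x_{t:∞}), min_{0 ≤ k < t} q (x_k))` (empty min is `⊤`). -/
noncomputable def untilTerm (q : X → EReal) (r : (ℕ → X) → EReal) (x : ℕ → X) (t : ℕ) : EReal :=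
  min (r (shift x t)) (⨅ k : Fin t, q (x k))

/-- Robustness of `q U r` on an infinite trajectory. -/
noncomputable def untilRob (q : X → EReal) (r : (ℕ → X) → EReal) (x : ℕ → X) : EReal :=
  ⨆ t : ℕ, untilTerm q r x t


lemma shift_splice (x : ℕ → X) (s τ : ℕ) (h : τ ≤ s) (z : ℕ → X) :
    shift (splice x s z) τ = splice (shift x τ) (s - τ) z := by
  funext n
  simp only [shift, splice]
  rcases lt_or_ge (n + τ) s with h1 | h1
  · rw [if_pos h1, if_pos (by omega)]
  · rw [if_neg (by omega), if_neg (by omega)]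
    congr 1
    omega

lemma infi_prefix (q : X → EReal) (x : ℕ → X) (s τ : ℕ) (h : τ ≤ s) (z : ℕ → X) :
    (⨅ k : Fin τ, q (splice x s z k)) = ⨅ i : Fin τ, q (x i) := by
  refine iInf_congr fun i => ?_
  have : (i : ℕ) < s := lt_of_lt_of_le i.isLt h
  simp [splice, this]

/-- value identity after the until witness has passed. Fix the history
`x_{0:s}` and suppose the optimal witness time `τ` of `ψ = q U r` at this history satisfies
`τ < s`: some feasible continuation attains the history value `Vhist f (untilRob q r) x s`
with witness time `τ`, and `τ` is minimal among witness times of optimal continuations. Then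
`Vhist f (untilRob q r) x s = min (min_{0 ≤ i < τ} q (x i)) (Vhist f r (shift x τ) (s - τ))`,
the second factor being the history value of `r` for the suffix history `x_{τ:s}`. -/
theorem until_value_identity_after_witness [Nonempty A]
    (f : X → A → X) (q : X → EReal) (r : (ℕ → X) → EReal)
    (x : ℕ → X) (s τ : ℕ) (hτs : τ < s)
    (hwit : ∃ a : ℕ → A,
      untilRob q r (splice x s (traj f (x s) a)) = Vhist f (untilRob q r) x s ∧
      untilRob q r (splice x s (traj f (x s) a)) =
        untilTerm q r (splice x s (traj f (x s) a)) τ)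
    (hmin : ∀ (a : ℕ → A) (t : ℕ),
      untilRob q r (splice x s (traj f (x s) a)) = Vhist f (untilRob q r) x s →
      untilRob q r (splice x s (traj f (x s) a)) =
        untilTerm q r (splice x s (traj f (x s) a)) t →
      τ ≤ t) :
    Vhist f (untilRob q r) x s =
      min (⨅ i : Fin τ, q (x i)) (Vhist f r (shift x τ) (s - τ)) := by
  obtain ⟨a0, ha1, ha2⟩ := hwit
  have hτs' : τ ≤ s := le_of_lt hτs
  have hstart : shift x τ (s - τ) = x s := by
    simp only [shift]
    congr 1
    omega
  set c := ⨅ i : Fin τ, q (x i) with hc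
  have hterm : ∀ a : ℕ → A,
      untilTerm q r (splice x s (traj f (x s) a)) τ =
        min (r (splice (shift x τ) (s - τ) (traj f (x s) a))) c := by
    intro a
    rw [untilTerm, infi_prefix q x s τ hτs', shift_splice x s τ hτs']
  apply le_antisymm
  · rw [← ha1, ha2, hterm a0, min_comm]
    refine min_le_min le_rfl ?_
    rw [Vhist, ← hstart]
    exact le_iSup (fun b => r (splice (shift x τ) (s - τ) (traj f (shift x τ (s - τ)) b))) a0
  · have hdist : min c (Vhist f r (shift x τ) (s - τ)) =
        ⨆ a : ℕ → A, min c (r (splice (shift x τ) (s - τ) (traj f (x s) a))) := by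
      rw [Vhist, hstart]
      exact inf_iSup_eq _ _
    rw [hdist]
    refine iSup_le fun a => ?_
    have h1 : min c (r (splice (shift x τ) (s - τ) (traj f (x s) a))) =
        untilTerm q r (splice x s (traj f (x s) a)) τ := by
      rw [hterm a, min_comm]
    rw [h1]
    calc untilTerm q r (splice x s (traj f (x s) a)) τ
        ≤ untilRob q r (splice x s (traj f (x s) a)) := le_iSup _ τ
      _ ≤ Vhist f (untilRob q r) x s := le_iSup (fun b => untilRob q r (splice x s (traj f (x s) b))) a
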